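/- The point set A₁ = T³ · (1/2)(1,1,1,i) ⊂ S⁷, where T³ acts by (e^{iα},e^{iβ},e^{iγ})·z = (e^{i(α+β)}z₁, e^{i(α−β)}z₂, e^{i(α+γ)}z₃, e^{i(α−γ)}z₄), equals {(z₁,z₂,z₃,z₄) ∈ S⁷ : |z₁| = |z₂| = |z₃| = |z₄|, Re(z₁z₂z̄₃z̄₄) = 0, Im(z₁z₂z̄₃z̄₄) < 0}. -/

import Mathlib

open Complex

private lemma exp_real_abs (t : ℝ) : ‖exp (I * t)‖ = 1 := by
  simp [Complex.norm_exp]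

private lemma conj_exp_I (t : ℂ) (ht : t.im = 0) :
    (starRingEnd ℂ) (exp (I * t)) = exp (-(I * t)) := by
  rw [← Complex.exp_conj]
  congr 1
  apply Complex.ext <;> simp [ht]

/- STATEMENT 13: The T³-orbit A₁ = T³ · (1/2)(1,1,1,i) in S⁷, for the action
(e^{iα},e^{iβ},e^{iγ})·z = (e^{i(α+β)}z₁, e^{i(α−β)}z₂, e^{i(α+γ)}z₃, e^{i(α−γ)}z₄),
equals {z ∈ S⁷ : |z₁| = |z₂| = |z₃| = |z₄|, Re(z₁z₂z̄₃z̄₄) = 0, Im(z₁z₂z̄₃z̄₄) < 0}. -/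
theorem T3_orbit_description :
    {w : Fin 4 → ℂ | ∃ α β γ : ℝ,
      w = ![exp (I * (α + β)) * (1 / 2),
            exp (I * (α - β)) * (1 / 2),
            exp (I * (α + γ)) * (1 / 2),
            exp (I * (α - γ)) * (I / 2)]} =
    {z : Fin 4 → ℂ |
      (∑ i, normSq (z i)) = 1 ∧
      ‖z 0‖ = ‖z 1‖ ∧ ‖z 1‖ = ‖z 2‖ ∧ ‖z 2‖ = ‖z 3‖ ∧
      (z 0 * z 1 * (starRingEnd ℂ) (z 2) * (starRingEnd ℂ) (z 3)).re = 0 ∧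
      (z 0 * z 1 * (starRingEnd ℂ) (z 2) * (starRingEnd ℂ) (z 3)).im < 0} := by
  ext z
  constructor
  · rintro ⟨α, β, γ, rfl⟩
    have h2 : ‖(1 / 2 : ℂ)‖ = 1 / 2 := by norm_num
    have h3 : ‖(I / 2 : ℂ)‖ = 1 / 2 := by
      rw [norm_div, Complex.norm_I]; norm_num
    have key : exp (I * (↑α + ↑β)) * (1 / 2) * (exp (I * (↑α - ↑β)) * (1 / 2)) *
        (starRingEnd ℂ) (exp (I * (↑α + ↑γ)) * (1 / 2)) *
        (starRingEnd ℂ) (exp (I * (↑α - ↑γ)) * (I / 2)) = -I / 16 := by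
      rw [map_mul, map_mul, conj_exp_I _ (by simp), conj_exp_I _ (by simp)]
      have h1 : exp (I * (↑α + ↑β)) * exp (I * (↑α - ↑β)) * exp (-(I * (↑α + ↑γ))) *
          exp (-(I * (↑α - ↑γ))) = 1 := by
        rw [← Complex.exp_add, ← Complex.exp_add, ← Complex.exp_add]
        rw [show I * (↑α + ↑β) + I * (↑α - ↑β) + -(I * (↑α + ↑γ)) + -(I * (↑α - ↑γ)) = 0
          by ring, Complex.exp_zero]
      have hconj : (starRingEnd ℂ) (1 / 2 : ℂ) = 1 / 2 := by
        apply Complex.ext <;> simp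
      have hconjI : (starRingEnd ℂ) (I / 2 : ℂ) = -I / 2 := by
        rw [div_eq_mul_inv, map_mul, Complex.conj_I, map_inv₀,
          show ((2:ℂ)) = ((2:ℝ):ℂ) by norm_num, Complex.conj_ofReal]
        ring
      rw [hconj, hconjI]
      calc exp (I * (↑α + ↑β)) * (1 / 2) * (exp (I * (↑α - ↑β)) * (1 / 2)) *
            (exp (-(I * (↑α + ↑γ))) * (1 / 2)) * (exp (-(I * (↑α - ↑γ))) * (-I / 2))
          = (exp (I * (↑α + ↑β)) * exp (I * (↑α - ↑β)) * exp (-(I * (↑α + ↑γ))) *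
            exp (-(I * (↑α - ↑γ)))) * (-I / 16) := by ring
        _ = -I / 16 := by rw [h1]; ring
    refine ⟨?_, ?_, ?_, ?_, ?_, ?_⟩
    · simp only [Fin.sum_univ_four, Matrix.cons_val_zero, Matrix.cons_val_one, Matrix.head_cons,
        Matrix.cons_val_two, Matrix.tail_cons, Matrix.cons_val_three]
      rw [Complex.normSq_eq_norm_sq, Complex.normSq_eq_norm_sq, Complex.normSq_eq_norm_sq,
        Complex.normSq_eq_norm_sq]
      rw [norm_mul, norm_mul, norm_mul, norm_mul]
      rw [show ((α : ℂ) + β) = ((α + β : ℝ) : ℂ) by push_cast; ring, exp_real_abs]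
      rw [show ((α : ℂ) - β) = ((α - β : ℝ) : ℂ) by push_cast; ring, exp_real_abs]
      rw [show ((α : ℂ) + γ) = ((α + γ : ℝ) : ℂ) by push_cast; ring, exp_real_abs]
      rw [show ((α : ℂ) - γ) = ((α - γ : ℝ) : ℂ) by push_cast; ring, exp_real_abs, h2, h3]
      norm_num
    · simp only [Matrix.cons_val_zero, Matrix.cons_val_one, Matrix.head_cons]
      rw [norm_mul, norm_mul,
        show ((α : ℂ) + β) = ((α + β : ℝ) : ℂ) by push_cast; ring, exp_real_abs,
        show ((α : ℂ) - β) = ((α - β : ℝ) : ℂ) by push_cast; ring, exp_real_abs]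
    · simp only [Matrix.cons_val_one, Matrix.head_cons, Matrix.cons_val_two, Matrix.tail_cons,
        Matrix.cons_val_zero]
      rw [norm_mul, norm_mul,
        show ((α : ℂ) - β) = ((α - β : ℝ) : ℂ) by push_cast; ring, exp_real_abs,
        show ((α : ℂ) + γ) = ((α + γ : ℝ) : ℂ) by push_cast; ring, exp_real_abs]
    · simp only [Matrix.cons_val_two, Matrix.tail_cons, Matrix.head_cons, Matrix.cons_val_three]
      rw [norm_mul, norm_mul,
        show ((α : ℂ) + γ) = ((α + γ : ℝ) : ℂ) by push_cast; ring, exp_real_abs,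
        show ((α : ℂ) - γ) = ((α - γ : ℝ) : ℂ) by push_cast; ring, exp_real_abs, h2, h3]
    · simp only [Matrix.cons_val_zero, Matrix.cons_val_one, Matrix.head_cons,
        Matrix.cons_val_two, Matrix.tail_cons, Matrix.cons_val_three]
      rw [key]; simp
    · simp only [Matrix.cons_val_zero, Matrix.cons_val_one, Matrix.head_cons,
        Matrix.cons_val_two, Matrix.tail_cons, Matrix.cons_val_three]
      rw [key]; norm_num
  · rintro ⟨hsum, h01, h12, h23, hre, him⟩
    have habs0 : ‖z 0‖ = 1 / 2 := by
      rw [Fin.sum_univ_four, Complex.normSq_eq_norm_sq, Complex.normSq_eq_norm_sq,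
        Complex.normSq_eq_norm_sq, Complex.normSq_eq_norm_sq, ← h01, ← h12, ← h01, ← h23, ← h12,
        ← h01] at hsum
      nlinarith [norm_nonneg (z 0)]
    have habs1 : ‖z 1‖ = 1 / 2 := by rw [← h01]; exact habs0
    have habs2 : ‖z 2‖ = 1 / 2 := by rw [← h12]; exact habs1
    have habs3 : ‖z 3‖ = 1 / 2 := by rw [← h23]; exact habs2
    set θ0 := (z 0).arg
    set θ1 := (z 1).arg
    set θ2 := (z 2).arg
    set θ3 := (z 3).arg
    have hz0 : z 0 = (1 / 2 : ℂ) * exp (θ0 * I) := by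
      conv_lhs => rw [← Complex.norm_mul_exp_arg_mul_I (z 0)]
      rw [habs0]; norm_num; rfl
    have hz1 : z 1 = (1 / 2 : ℂ) * exp (θ1 * I) := by
      conv_lhs => rw [← Complex.norm_mul_exp_arg_mul_I (z 1)]
      rw [habs1]; norm_num; rfl
    have hz2 : z 2 = (1 / 2 : ℂ) * exp (θ2 * I) := by
      conv_lhs => rw [← Complex.norm_mul_exp_arg_mul_I (z 2)]
      rw [habs2]; norm_num; rfl
    have hz3 : z 3 = (1 / 2 : ℂ) * exp (θ3 * I) := by
      conv_lhs => rw [← Complex.norm_mul_exp_arg_mul_I (z 3)]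
      rw [habs3]; norm_num; rfl
    set S : ℝ := θ0 + θ1 - θ2 - θ3 with hS
    have hprod : z 0 * z 1 * (starRingEnd ℂ) (z 2) * (starRingEnd ℂ) (z 3) =
        (1 / 16 : ℂ) * exp ((S : ℂ) * I) := by
      rw [hz0, hz1, hz2, hz3, map_mul, map_mul]
      have c2 : (starRingEnd ℂ) (exp ((θ2 : ℂ) * I)) = exp (-((θ2 : ℂ) * I)) := by
        rw [← Complex.exp_conj]; congr 1; apply Complex.ext <;> simp
      have c3 : (starRingEnd ℂ) (exp ((θ3 : ℂ) * I)) = exp (-((θ3 : ℂ) * I)) := by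
        rw [← Complex.exp_conj]; congr 1; apply Complex.ext <;> simp
      have chalf : (starRingEnd ℂ) (1 / 2 : ℂ) = 1 / 2 := by
        apply Complex.ext <;> simp
      rw [c2, c3, chalf]
      have hmul : exp ((θ0 : ℂ) * I) * exp ((θ1 : ℂ) * I) * exp (-((θ2 : ℂ) * I)) *
          exp (-((θ3 : ℂ) * I)) = exp ((S : ℂ) * I) := by
        rw [← Complex.exp_add, ← Complex.exp_add, ← Complex.exp_add]
        congr 1
        push_cast [hS]
        ring
      calc (1 / 2 : ℂ) * exp ((θ0 : ℂ) * I) * ((1 / 2 : ℂ) * exp ((θ1 : ℂ) * I)) *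
            ((1 / 2 : ℂ) * exp (-((θ2 : ℂ) * I))) * ((1 / 2 : ℂ) * exp (-((θ3 : ℂ) * I)))
          = (1 / 16 : ℂ) * (exp ((θ0 : ℂ) * I) * exp ((θ1 : ℂ) * I) * exp (-((θ2 : ℂ) * I)) *
            exp (-((θ3 : ℂ) * I))) := by ring
        _ = (1 / 16 : ℂ) * exp ((S : ℂ) * I) := by rw [hmul]
    rw [hprod] at hre him
    have hre' : Real.cos S = 0 := by
      have h : ((1 / 16 : ℂ) * exp ((S : ℂ) * I)).re = Real.cos S / 16 := by
        simp [Complex.mul_re, Complex.exp_ofReal_mul_I_re, Complex.exp_ofReal_mul_I_im]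
        ring
      rw [h] at hre; linarith
    have him' : Real.sin S < 0 := by
      have h : ((1 / 16 : ℂ) * exp ((S : ℂ) * I)).im = Real.sin S / 16 := by
        simp [Complex.mul_im, Complex.exp_ofReal_mul_I_re, Complex.exp_ofReal_mul_I_im]
        ring
      rw [h] at him; linarith
    have hsin : Real.sin S = -1 := by
      have h := Real.sin_sq_add_cos_sq S
      rw [hre'] at h
      nlinarith
    have hexpS : exp ((S : ℂ) * I) = -I := by
      rw [Complex.exp_mul_I]
      rw [show Complex.cos (S : ℂ) = ((Real.cos S : ℝ) : ℂ) by rw [Complex.ofReal_cos],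
        show Complex.sin (S : ℂ) = ((Real.sin S : ℝ) : ℂ) by rw [Complex.ofReal_sin],
        hre', hsin]
      simp
    refine ⟨(θ0 + θ1) / 2, (θ0 - θ1) / 2, (θ0 + θ1) / 2 - θ3 + Real.pi / 2, ?_⟩
    have hexp_pi2 : exp (I * ((Real.pi / 2 : ℝ) : ℂ)) = I := by
      rw [mul_comm, Complex.exp_mul_I]
      simp
    have e0 : z 0 = exp (I * ((((θ0 + θ1) / 2 : ℝ) : ℂ) + (((θ0 - θ1) / 2 : ℝ) : ℂ))) *
        (1 / 2) := by
      rw [hz0, show I * ((((θ0 + θ1) / 2 : ℝ) : ℂ) + (((θ0 - θ1) / 2 : ℝ) : ℂ)) =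
        (θ0 : ℂ) * I by push_cast; ring]
      ring
    have e1 : z 1 = exp (I * ((((θ0 + θ1) / 2 : ℝ) : ℂ) - (((θ0 - θ1) / 2 : ℝ) : ℂ))) *
        (1 / 2) := by
      rw [hz1, show I * ((((θ0 + θ1) / 2 : ℝ) : ℂ) - (((θ0 - θ1) / 2 : ℝ) : ℂ)) =
        (θ1 : ℂ) * I by push_cast; ring]
      ring
    have e2 : z 2 = exp (I * ((((θ0 + θ1) / 2 : ℝ) : ℂ) +
        (((θ0 + θ1) / 2 - θ3 + Real.pi / 2 : ℝ) : ℂ))) * (1 / 2) := by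
      rw [hz2, show I * ((((θ0 + θ1) / 2 : ℝ) : ℂ) +
          (((θ0 + θ1) / 2 - θ3 + Real.pi / 2 : ℝ) : ℂ)) =
        (θ2 : ℂ) * I + (S : ℂ) * I + I * ((Real.pi / 2 : ℝ) : ℂ) by push_cast [hS]; ring]
      rw [Complex.exp_add, Complex.exp_add, hexpS, hexp_pi2]
      linear_combination (exp ((θ2 : ℂ) * I) / 2) * Complex.I_mul_I
    have e3 : z 3 = exp (I * ((((θ0 + θ1) / 2 : ℝ) : ℂ) -
        (((θ0 + θ1) / 2 - θ3 + Real.pi / 2 : ℝ) : ℂ))) * (I / 2) := by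
      rw [hz3, show I * ((((θ0 + θ1) / 2 : ℝ) : ℂ) -
          (((θ0 + θ1) / 2 - θ3 + Real.pi / 2 : ℝ) : ℂ)) =
        (θ3 : ℂ) * I - I * ((Real.pi / 2 : ℝ) : ℂ) by push_cast; ring]
      rw [Complex.exp_sub, hexp_pi2]
      field_simp
    funext i
    fin_cases i
    · exact e0
    · exact e1
    · exact e2
    · exact e3
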